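/- If f : Q → ℝ has continuous partial derivatives p = ∂f/∂x and q = ∂f/∂y on Q = [0,1]², then the Geöcze sums G(f;Dₙ) along subdivisions Dₙ of Q into rectangles with maximum diameter tending to zero converge to ∬_Q (1 + p² + q²)^{1/2} dx dy. -/

import Mathlib

set_option maxHeartbeats 1000000

open MeasureTheory Set Filter Topology

/-- The unit square `Q = [0,1] × [0,1]`. -/
def unitSquare : Set (ℝ × ℝ) := Set.Icc (0, 0) (1, 1)

/-- `G_X(f;R) = ∫ₐᵇ |f(x,d) − f(x,c)| dx` for the rectangle `R = [a,b] × [c,d]`. -/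
noncomputable def geoczeX (f : ℝ × ℝ → ℝ) (a b c d : ℝ) : ℝ :=
  ∫ x in a..b, |f (x, d) - f (x, c)|

/-- `G_Y(f;R) = ∫_c^d |f(b,y) − f(a,y)| dy` for the rectangle `R = [a,b] × [c,d]`. -/
noncomputable def geoczeY (f : ℝ × ℝ → ℝ) (a b c d : ℝ) : ℝ :=
  ∫ y in c..d, |f (b, y) - f (a, y)|

/-- `Γ(f;R) = √(G_X(f;R)² + G_Y(f;R)² + |R|²)`. -/
noncomputable def geoczeGamma (f : ℝ × ℝ → ℝ) (a b c d : ℝ) : ℝ :=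
  Real.sqrt ((geoczeX f a b c d) ^ 2 + (geoczeY f a b c d) ^ 2 +
    ((b - a) * (d - c)) ^ 2)

lemma sqrt_lip {k u v : ℝ} (hk : 0 ≤ k) (hu : 0 ≤ u) (hv : 0 ≤ v) :
    |Real.sqrt (u ^ 2 + k) - Real.sqrt (v ^ 2 + k)| ≤ |u - v| := by
  have hs : Real.sqrt (u ^ 2 + k) ^ 2 = u ^ 2 + k := Real.sq_sqrt (by positivity)
  have ht : Real.sqrt (v ^ 2 + k) ^ 2 = v ^ 2 + k := Real.sq_sqrt (by positivity)
  have hsu : u ≤ Real.sqrt (u ^ 2 + k) := by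
    nlinarith [Real.sqrt_nonneg (u ^ 2 + k)]
  have htv : v ≤ Real.sqrt (v ^ 2 + k) := by
    nlinarith [Real.sqrt_nonneg (v ^ 2 + k)]
  have hst : u * v + k ≤ Real.sqrt (u ^ 2 + k) * Real.sqrt (v ^ 2 + k) := by
    rw [← Real.sqrt_mul (by positivity)]
    have : (u * v + k) ^ 2 ≤ (u ^ 2 + k) * (v ^ 2 + k) := by nlinarith [sq_nonneg (u - v)]
    calc u * v + k = Real.sqrt ((u * v + k) ^ 2) := (Real.sqrt_sq (by positivity)).symm
      _ ≤ _ := Real.sqrt_le_sqrt this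
  rw [abs_le]
  constructor <;>
    nlinarith [abs_nonneg (u - v), sq_abs (u - v), neg_abs_le (u - v), le_abs_self (u - v)]

lemma sqrt_lip2 {w u v u' v' : ℝ} (hw : 0 ≤ w) (hu : 0 ≤ u) (hv : 0 ≤ v)
    (hu' : 0 ≤ u') (hv' : 0 ≤ v') :
    |Real.sqrt (u ^ 2 + v ^ 2 + w) - Real.sqrt (u' ^ 2 + v' ^ 2 + w)| ≤
      |u - u'| + |v - v'| := by
  have h1 : |Real.sqrt (u ^ 2 + v ^ 2 + w) - Real.sqrt (u' ^ 2 + v ^ 2 + w)| ≤ |u - u'| := by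
    rw [show u ^ 2 + v ^ 2 + w = u ^ 2 + (v ^ 2 + w) by ring,
        show u' ^ 2 + v ^ 2 + w = u' ^ 2 + (v ^ 2 + w) by ring]
    exact sqrt_lip (by positivity) hu hu'
  have h2 : |Real.sqrt (u' ^ 2 + v ^ 2 + w) - Real.sqrt (u' ^ 2 + v' ^ 2 + w)| ≤ |v - v'| := by
    rw [show u' ^ 2 + v ^ 2 + w = v ^ 2 + (u' ^ 2 + w) by ring,
        show u' ^ 2 + v' ^ 2 + w = v' ^ 2 + (u' ^ 2 + w) by ring]
    exact sqrt_lip (by positivity) hv hv'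
  linarith [abs_sub_le (Real.sqrt (u ^ 2 + v ^ 2 + w)) (Real.sqrt (u' ^ 2 + v ^ 2 + w))
    (Real.sqrt (u' ^ 2 + v' ^ 2 + w))]

lemma vol_Icc_prod (a b c d : ℝ) :
    volume (Set.Icc ((a, c) : ℝ × ℝ) (b, d)) =
      ENNReal.ofReal (b - a) * ENNReal.ofReal (d - c) := by
  rw [Icc_prod_eq, Measure.volume_eq_prod, Measure.prod_prod, Real.volume_Icc, Real.volume_Icc]

lemma null_inter {a b c d a' b' c' d' : ℝ}
    (h : interior (Set.Icc ((a, c) : ℝ × ℝ) (b, d)) ∩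
      interior (Set.Icc ((a', c') : ℝ × ℝ) (b', d')) = ∅) :
    volume (Set.Icc ((a, c) : ℝ × ℝ) (b, d) ∩ Set.Icc ((a', c') : ℝ × ℝ) (b', d')) = 0 := by
  rw [Set.Icc_inter_Icc] at *
  have hint : interior (Set.Icc (((a, c) : ℝ × ℝ) ⊔ (a', c')) ((b, d) ⊓ (b', d'))) = ∅ := by
    rw [← interior_inter] at h
    rw [Set.Icc_inter_Icc] at h
    exact h
  have : ((a, c) : ℝ × ℝ) ⊔ (a', c') = (a ⊔ a', c ⊔ c') := rfl
  rw [this] at hint ⊢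
  have : ((b, d) : ℝ × ℝ) ⊓ (b', d') = (b ⊓ b', d ⊓ d') := rfl
  rw [this] at hint ⊢
  rw [Icc_prod_eq] at hint
  rw [interior_prod_eq, interior_Icc, interior_Icc] at hint
  rw [vol_Icc_prod]
  rcases Set.prod_eq_empty_iff.mp hint with h1 | h1 <;>
    rw [Set.Ioo_eq_empty_iff] at h1 <;> simp only [not_lt] at h1
  · rw [mul_eq_zero]; left
    simp only [ENNReal.ofReal_eq_zero]
    simpa using h1
  · rw [mul_eq_zero]; right
    simp only [ENNReal.ofReal_eq_zero]
    simpa using h1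

lemma geoczeX_bound (f q : ℝ × ℝ → ℝ) (ε' A B C D : ℝ) (hAB : A < B) (hCD : C < D)
    (hq : ContinuousOn q unitSquare)
    (hsub : Set.Icc ((A, C) : ℝ × ℝ) (B, D) ⊆ unitSquare)
    (hdx : ∀ z ∈ unitSquare, ContinuousAt (fun t => f (t, z.2)) z.1)
    (hdy : ∀ z ∈ unitSquare, HasDerivAt (fun t => f (z.1, t)) (q z) z.2)
    (hqc : ∀ z ∈ Set.Icc ((A, C) : ℝ × ℝ) (B, D), |q z - q (A, C)| ≤ ε') :
    abs (geoczeX f A B C D - (B - A) * (D - C) * |q (A, C)|) ≤ ε' * ((B - A) * (D - C)) := by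
  have hmem : ∀ s ∈ Set.Icc A B, ∀ t ∈ Set.Icc C D,
      ((s, t) : ℝ × ℝ) ∈ Set.Icc ((A, C) : ℝ × ℝ) (B, D) := by
    intro s hs t ht
    rw [Set.mem_Icc]
    exact ⟨⟨hs.1, ht.1⟩, ⟨hs.2, ht.2⟩⟩
  have hqint : ∀ x ∈ Set.Icc A B, IntervalIntegrable (fun t => q (x, t)) volume C D := by
    intro x hx
    apply ContinuousOn.intervalIntegrable
    rw [Set.uIcc_of_le hCD.le]
    exact hq.comp (Continuous.continuousOn (by continuity))
      (fun t ht => hsub (hmem x hx t ht))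
  have h1 : ∀ x ∈ Set.Icc A B, f (x, D) - f (x, C) = ∫ y in C..D, q (x, y) := by
    intro x hx
    rw [intervalIntegral.integral_eq_sub_of_hasDerivAt (f := fun t => f (x, t))
      (f' := fun t => q (x, t)) ?_ (hqint x hx)]
    intro t ht
    rw [Set.uIcc_of_le hCD.le] at ht
    exact hdy (x, t) (hsub (hmem x hx t ht))
  have hpt : ∀ x ∈ Set.Icc A B,
      abs (|f (x, D) - f (x, C)| - (D - C) * |q (A, C)|) ≤ ε' * (D - C) := by
    intro x hx
    rw [h1 x hx]
    have hconst : (D - C) * q (A, C) = ∫ _ in C..D, q (A, C) := by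
      rw [intervalIntegral.integral_const, smul_eq_mul]
    have key : |(∫ y in C..D, q (x, y)) - (D - C) * q (A, C)| ≤ ε' * (D - C) := by
      rw [hconst, ← intervalIntegral.integral_sub (hqint x hx) intervalIntegrable_const]
      have := intervalIntegral.norm_integral_le_of_norm_le_const
        (C := ε') (f := fun y => q (x, y) - q (A, C)) (a := C) (b := D) ?_
      · rw [abs_of_nonneg (by linarith : (0:ℝ) ≤ D - C)] at this
        exact this
      · intro y hy
        rw [Set.uIoc_of_le hCD.le] at hy
        exact hqc (x, y) (hmem x hx y ⟨hy.1.le, hy.2⟩)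
    calc abs (|∫ y in C..D, q (x, y)| - (D - C) * |q (A, C)|)
        = abs (|∫ y in C..D, q (x, y)| - |(D - C) * q (A, C)|) := by
          rw [abs_mul, abs_of_nonneg (by linarith : (0:ℝ) ≤ D - C)]
      _ ≤ |(∫ y in C..D, q (x, y)) - (D - C) * q (A, C)| := abs_abs_sub_abs_le_abs_sub _ _
      _ ≤ ε' * (D - C) := key
  have hcont : ContinuousOn (fun x => |f (x, D) - f (x, C)|) (Set.Icc A B) := by
    apply ContinuousOn.abs
    apply ContinuousOn.sub
    · intro x hx
      exact (hdx (x, D) (hsub (hmem x hx D ⟨hCD.le, le_refl D⟩))).continuousWithinAt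
    · intro x hx
      exact (hdx (x, C) (hsub (hmem x hx C ⟨le_refl C, hCD.le⟩))).continuousWithinAt
  have hint1 : IntervalIntegrable (fun x => |f (x, D) - f (x, C)|) volume A B := by
    apply ContinuousOn.intervalIntegrable
    rwa [Set.uIcc_of_le hAB.le]
  have heq : geoczeX f A B C D - (B - A) * (D - C) * |q (A, C)|
      = ∫ x in A..B, (|f (x, D) - f (x, C)| - (D - C) * |q (A, C)|) := by
    rw [intervalIntegral.integral_sub hint1 intervalIntegrable_const, geoczeX]
    rw [intervalIntegral.integral_const, smul_eq_mul]
    ring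
  rw [heq]
  have := intervalIntegral.norm_integral_le_of_norm_le_const
    (C := ε' * (D - C)) (f := fun x => |f (x, D) - f (x, C)| - (D - C) * |q (A, C)|)
    (a := A) (b := B) ?_
  · rw [abs_of_nonneg (by linarith : (0:ℝ) ≤ B - A)] at this
    calc _ ≤ ε' * (D - C) * (B - A) := this
      _ = ε' * ((B - A) * (D - C)) := by ring
  · intro x hx
    rw [Set.uIoc_of_le hAB.le] at hx
    exact hpt x ⟨hx.1.le, hx.2⟩

lemma geoczeY_bound (f p : ℝ × ℝ → ℝ) (ε' A B C D : ℝ) (hAB : A < B) (hCD : C < D)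
    (hp : ContinuousOn p unitSquare)
    (hsub : Set.Icc ((A, C) : ℝ × ℝ) (B, D) ⊆ unitSquare)
    (hdx : ∀ z ∈ unitSquare, HasDerivAt (fun t => f (t, z.2)) (p z) z.1)
    (hdy : ∀ z ∈ unitSquare, ContinuousAt (fun t => f (z.1, t)) z.2)
    (hpc : ∀ z ∈ Set.Icc ((A, C) : ℝ × ℝ) (B, D), |p z - p (A, C)| ≤ ε') :
    abs (geoczeY f A B C D - (B - A) * (D - C) * |p (A, C)|) ≤ ε' * ((B - A) * (D - C)) := by
  have hmem : ∀ s ∈ Set.Icc A B, ∀ t ∈ Set.Icc C D,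
      ((s, t) : ℝ × ℝ) ∈ Set.Icc ((A, C) : ℝ × ℝ) (B, D) := by
    intro s hs t ht
    rw [Set.mem_Icc]
    exact ⟨⟨hs.1, ht.1⟩, ⟨hs.2, ht.2⟩⟩
  have hpint : ∀ y ∈ Set.Icc C D, IntervalIntegrable (fun s => p (s, y)) volume A B := by
    intro y hy
    apply ContinuousOn.intervalIntegrable
    rw [Set.uIcc_of_le hAB.le]
    exact hp.comp (Continuous.continuousOn (by continuity))
      (fun s hs => hsub (hmem s hs y hy))
  have h1 : ∀ y ∈ Set.Icc C D, f (B, y) - f (A, y) = ∫ x in A..B, p (x, y) := by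
    intro y hy
    rw [intervalIntegral.integral_eq_sub_of_hasDerivAt (f := fun s => f (s, y))
      (f' := fun s => p (s, y)) ?_ (hpint y hy)]
    intro s hs
    rw [Set.uIcc_of_le hAB.le] at hs
    exact hdx (s, y) (hsub (hmem s hs y hy))
  have hpt : ∀ y ∈ Set.Icc C D,
      abs (|f (B, y) - f (A, y)| - (B - A) * |p (A, C)|) ≤ ε' * (B - A) := by
    intro y hy
    rw [h1 y hy]
    have hconst : (B - A) * p (A, C) = ∫ _ in A..B, p (A, C) := by
      rw [intervalIntegral.integral_const, smul_eq_mul]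
    have key : |(∫ x in A..B, p (x, y)) - (B - A) * p (A, C)| ≤ ε' * (B - A) := by
      rw [hconst, ← intervalIntegral.integral_sub (hpint y hy) intervalIntegrable_const]
      have := intervalIntegral.norm_integral_le_of_norm_le_const
        (C := ε') (f := fun x => p (x, y) - p (A, C)) (a := A) (b := B) ?_
      · rw [abs_of_nonneg (by linarith : (0:ℝ) ≤ B - A)] at this
        exact this
      · intro x hx
        rw [Set.uIoc_of_le hAB.le] at hx
        exact hpc (x, y) (hmem x ⟨hx.1.le, hx.2⟩ y hy)
    calc abs (|∫ x in A..B, p (x, y)| - (B - A) * |p (A, C)|)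
        = abs (|∫ x in A..B, p (x, y)| - |(B - A) * p (A, C)|) := by
          rw [abs_mul, abs_of_nonneg (by linarith : (0:ℝ) ≤ B - A)]
      _ ≤ |(∫ x in A..B, p (x, y)) - (B - A) * p (A, C)| := abs_abs_sub_abs_le_abs_sub _ _
      _ ≤ ε' * (B - A) := key
  have hcont : ContinuousOn (fun y => |f (B, y) - f (A, y)|) (Set.Icc C D) := by
    apply ContinuousOn.abs
    apply ContinuousOn.sub
    · intro y hy
      exact (hdy (B, y) (hsub (hmem B ⟨hAB.le, le_refl B⟩ y hy))).continuousWithinAt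
    · intro y hy
      exact (hdy (A, y) (hsub (hmem A ⟨le_refl A, hAB.le⟩ y hy))).continuousWithinAt
  have hint1 : IntervalIntegrable (fun y => |f (B, y) - f (A, y)|) volume C D := by
    apply ContinuousOn.intervalIntegrable
    rwa [Set.uIcc_of_le hCD.le]
  have heq : geoczeY f A B C D - (B - A) * (D - C) * |p (A, C)|
      = ∫ y in C..D, (|f (B, y) - f (A, y)| - (B - A) * |p (A, C)|) := by
    rw [intervalIntegral.integral_sub hint1 intervalIntegrable_const, geoczeY]
    rw [intervalIntegral.integral_const, smul_eq_mul]
    ring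
  rw [heq]
  have := intervalIntegral.norm_integral_le_of_norm_le_const
    (C := ε' * (B - A)) (f := fun y => |f (B, y) - f (A, y)| - (B - A) * |p (A, C)|)
    (a := C) (b := D) ?_
  · rw [abs_of_nonneg (by linarith : (0:ℝ) ≤ D - C)] at this
    calc _ ≤ ε' * (B - A) * (D - C) := this
      _ = ε' * ((B - A) * (D - C)) := by ring
  · intro y hy
    rw [Set.uIoc_of_le hCD.le] at hy
    exact hpt y ⟨hy.1.le, hy.2⟩

lemma rect_bound (f p q : ℝ × ℝ → ℝ) (ε' A B C D : ℝ)
    (hAB : A < B) (hCD : C < D)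
    (hp : ContinuousOn p unitSquare) (hq : ContinuousOn q unitSquare)
    (hsub : Set.Icc ((A, C) : ℝ × ℝ) (B, D) ⊆ unitSquare)
    (hdx : ∀ z ∈ unitSquare, HasDerivAt (fun t => f (t, z.2)) (p z) z.1)
    (hdy : ∀ z ∈ unitSquare, HasDerivAt (fun t => f (z.1, t)) (q z) z.2)
    (hg_int : IntegrableOn (fun z => Real.sqrt (1 + p z ^ 2 + q z ^ 2)) unitSquare)
    (hpc : ∀ z ∈ Set.Icc ((A, C) : ℝ × ℝ) (B, D), |p z - p (A, C)| ≤ ε')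
    (hqc : ∀ z ∈ Set.Icc ((A, C) : ℝ × ℝ) (B, D), |q z - q (A, C)| ≤ ε') :
    abs (geoczeGamma f A B C D -
      ∫ z in Set.Icc ((A, C) : ℝ × ℝ) (B, D), Real.sqrt (1 + p z ^ 2 + q z ^ 2)) ≤
      4 * ε' * ((B - A) * (D - C)) := by
  set R := Set.Icc ((A, C) : ℝ × ℝ) (B, D) with hR
  set V := (B - A) * (D - C) with hV
  have hV0 : 0 ≤ V := by
    apply mul_nonneg <;> linarith
  set g := fun z : ℝ × ℝ => Real.sqrt (1 + p z ^ 2 + q z ^ 2) with hg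
  have hz₀ : ((A, C) : ℝ × ℝ) ∈ R := by
    rw [hR, Set.mem_Icc]
    exact ⟨le_refl _, ⟨hAB.le, hCD.le⟩⟩
  have hGX := geoczeX_bound f q ε' A B C D hAB hCD hq hsub
    (fun z hz => (hdx z hz).continuousAt) hdy hqc
  have hGY := geoczeY_bound f p ε' A B C D hAB hCD hp hsub hdx
    (fun z hz => (hdy z hz).continuousAt) hpc
  have hGX0 : 0 ≤ geoczeX f A B C D :=
    intervalIntegral.integral_nonneg hAB.le (fun u _ => abs_nonneg _)
  have hGY0 : 0 ≤ geoczeY f A B C D :=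
    intervalIntegral.integral_nonneg hCD.le (fun u _ => abs_nonneg _)
  have hT : V * g (A, C) =
      Real.sqrt ((V * |q (A, C)|) ^ 2 + (V * |p (A, C)|) ^ 2 + V ^ 2) := by
    rw [show (V * |q (A, C)|) ^ 2 + (V * |p (A, C)|) ^ 2 + V ^ 2
        = V ^ 2 * (1 + p (A, C) ^ 2 + q (A, C) ^ 2) by
      simp only [mul_pow, sq_abs]; ring]
    rw [Real.sqrt_mul (sq_nonneg V), Real.sqrt_sq hV0]
  have hstep1 : abs (geoczeGamma f A B C D - V * g (A, C)) ≤ 2 * ε' * V := by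
    rw [hT, geoczeGamma]
    have := sqrt_lip2 (w := V ^ 2) (u' := V * |q (A, C)|) (v' := V * |p (A, C)|)
      (sq_nonneg V) hGX0 hGY0
      (mul_nonneg hV0 (abs_nonneg _)) (mul_nonneg hV0 (abs_nonneg _))
    have e1 : abs (geoczeX f A B C D - V * |q (A, C)|) ≤ ε' * V := by
      rw [show V * |q (A, C)| = (B - A) * (D - C) * |q (A, C)| by rw [hV]]
      calc _ ≤ ε' * ((B - A) * (D - C)) := hGX
        _ = ε' * V := by rw [hV]
    have e2 : abs (geoczeY f A B C D - V * |p (A, C)|) ≤ ε' * V := by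
      rw [show V * |p (A, C)| = (B - A) * (D - C) * |p (A, C)| by rw [hV]]
      calc _ ≤ ε' * ((B - A) * (D - C)) := hGY
        _ = ε' * V := by rw [hV]
    calc abs (Real.sqrt (geoczeX f A B C D ^ 2 + geoczeY f A B C D ^ 2 + V ^ 2) -
          Real.sqrt ((V * |q (A, C)|) ^ 2 + (V * |p (A, C)|) ^ 2 + V ^ 2))
        ≤ abs (geoczeX f A B C D - V * |q (A, C)|) +
          abs (geoczeY f A B C D - V * |p (A, C)|) := this
      _ ≤ ε' * V + ε' * V := add_le_add e1 e2
      _ = 2 * ε' * V := by ring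
  have hRmeas : MeasurableSet R := measurableSet_Icc
  have hRvol : volume R = ENNReal.ofReal (B - A) * ENNReal.ofReal (D - C) :=
    vol_Icc_prod A B C D
  have hRvol_lt : volume R < ⊤ := by
    rw [hRvol]; exact ENNReal.mul_lt_top ENNReal.ofReal_lt_top ENNReal.ofReal_lt_top
  have hRvol_toReal : (volume R).toReal = V := by
    rw [hRvol, ENNReal.toReal_mul, ENNReal.toReal_ofReal (by linarith),
      ENNReal.toReal_ofReal (by linarith), hV]
  have hgR_int : IntegrableOn g R := hg_int.mono_set hsub
  have hgpt : ∀ z ∈ R, abs (g z - g (A, C)) ≤ 2 * ε' := by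
    intro z hz
    have e : ∀ w : ℝ × ℝ, g w = Real.sqrt (|q w| ^ 2 + |p w| ^ 2 + 1) := by
      intro w
      rw [hg]
      rw [sq_abs, sq_abs]
      congr 1
      ring
    rw [e z, e (A, C)]
    calc abs (Real.sqrt (|q z| ^ 2 + |p z| ^ 2 + 1) -
          Real.sqrt (|q (A, C)| ^ 2 + |p (A, C)| ^ 2 + 1))
        ≤ abs (|q z| - |q (A, C)|) + abs (|p z| - |p (A, C)|) :=
          sqrt_lip2 zero_le_one (abs_nonneg _) (abs_nonneg _) (abs_nonneg _) (abs_nonneg _)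
      _ ≤ abs (q z - q (A, C)) + abs (p z - p (A, C)) :=
          add_le_add (abs_abs_sub_abs_le_abs_sub _ _) (abs_abs_sub_abs_le_abs_sub _ _)
      _ ≤ ε' + ε' := add_le_add (hqc z hz) (hpc z hz)
      _ = 2 * ε' := by ring
  have hstep2 : abs ((∫ z in R, g z) - V * g (A, C)) ≤ 2 * ε' * V := by
    have hconst : ∫ _ in R, g (A, C) = V * g (A, C) := by
      rw [setIntegral_const, measureReal_def, hRvol_toReal, smul_eq_mul]
    rw [← hconst, ← integral_sub hgR_int (integrableOn_const hRvol_lt.ne)]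
    have hgc : ContinuousOn g R := Real.continuous_sqrt.comp_continuousOn
      ((continuousOn_const.add (((hp.mono hsub)).pow 2)).add ((hq.mono hsub).pow 2))
    have hmeas : AEStronglyMeasurable (fun z => g z - g (A, C)) (volume.restrict R) :=
      (hgc.sub continuousOn_const).aestronglyMeasurable hRmeas
    have := norm_setIntegral_le_of_norm_le_const (C := 2 * ε') hRvol_lt
      (f := fun z => g z - g (A, C))
      (fun z hz => by rw [Real.norm_eq_abs]; exact hgpt z hz)
    rw [Real.norm_eq_abs, measureReal_def, hRvol_toReal] at this
    exact this
  calc abs (geoczeGamma f A B C D - ∫ z in R, g z)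
      ≤ abs (geoczeGamma f A B C D - V * g (A, C)) +
        abs (V * g (A, C) - ∫ z in R, g z) := abs_sub_le _ _ _
    _ ≤ 2 * ε' * V + 2 * ε' * V := by
        refine add_le_add hstep1 ?_
        rw [abs_sub_comm]
        exact hstep2
    _ = 4 * ε' * ((B - A) * (D - C)) := by rw [hV]; ring

theorem geocze_sums_tendsto_integral (f p q : ℝ × ℝ → ℝ)
    (hp : ContinuousOn p unitSquare) (hq : ContinuousOn q unitSquare)
    (hdx : ∀ z ∈ unitSquare, HasDerivAt (fun t => f (t, z.2)) (p z) z.1)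
    (hdy : ∀ z ∈ unitSquare, HasDerivAt (fun t => f (z.1, t)) (q z) z.2)
    (k : ℕ → ℕ) (a b c d : (n : ℕ) → Fin (k n) → ℝ)
    (hab : ∀ n i, a n i < b n i) (hcd : ∀ n i, c n i < d n i)
    (hcover : ∀ n, (⋃ i, Set.Icc ((a n i, c n i) : ℝ × ℝ) (b n i, d n i)) = unitSquare)
    (hdisj : ∀ n, ∀ i j, i ≠ j →
      interior (Set.Icc ((a n i, c n i) : ℝ × ℝ) (b n i, d n i)) ∩
        interior (Set.Icc ((a n j, c n j) : ℝ × ℝ) (b n j, d n j)) = ∅)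
    (hmesh : ∀ ε > 0, ∃ N, ∀ n ≥ N, ∀ i,
      Metric.diam (Set.Icc ((a n i, c n i) : ℝ × ℝ) (b n i, d n i)) < ε) :
    Tendsto (fun n => ∑ i, geoczeGamma f (a n i) (b n i) (c n i) (d n i)) atTop
      (𝓝 (∫ z in unitSquare, Real.sqrt (1 + (p z) ^ 2 + (q z) ^ 2))) := by
  have hQcomp : IsCompact unitSquare := isCompact_Icc
  have hgc : ContinuousOn (fun z : ℝ × ℝ => Real.sqrt (1 + p z ^ 2 + q z ^ 2)) unitSquare :=
    Real.continuous_sqrt.comp_continuousOn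
      ((continuousOn_const.add (hp.pow 2)).add (hq.pow 2))
  have hg_int : IntegrableOn (fun z : ℝ × ℝ => Real.sqrt (1 + p z ^ 2 + q z ^ 2)) unitSquare :=
    hgc.integrableOn_compact hQcomp
  rw [Metric.tendsto_atTop]
  intro ε hε
  have hε5 : (0:ℝ) < ε / 5 := by linarith
  -- uniform continuity
  obtain ⟨δ₁, hδ₁, hδ₁p⟩ := Metric.uniformContinuousOn_iff.mp
    (hQcomp.uniformContinuousOn_of_continuous hp) (ε / 5) hε5
  obtain ⟨δ₂, hδ₂, hδ₂q⟩ := Metric.uniformContinuousOn_iff.mp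
    (hQcomp.uniformContinuousOn_of_continuous hq) (ε / 5) hε5
  obtain ⟨N, hN⟩ := hmesh (min δ₁ δ₂) (lt_min hδ₁ hδ₂)
  refine ⟨N, fun n hn => ?_⟩
  set S : Fin (k n) → Set (ℝ × ℝ) :=
    fun i => Set.Icc ((a n i, c n i) : ℝ × ℝ) (b n i, d n i) with hS
  have hSsub : ∀ i, S i ⊆ unitSquare := fun i => (hcover n) ▸ Set.subset_iUnion S i
  have hS_nm : ∀ i, NullMeasurableSet (S i) volume :=
    fun i => measurableSet_Icc.nullMeasurableSet
  have hS_ae : Pairwise (Function.onFun (AEDisjoint volume) S) :=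
    fun i j hij => null_inter (hdisj n i j hij)
  have hz₀mem : ∀ i, ((a n i, c n i) : ℝ × ℝ) ∈ S i := by
    intro i
    rw [hS, Set.mem_Icc]
    exact ⟨le_refl _, ⟨(hab n i).le, (hcd n i).le⟩⟩
  have hclose : ∀ i, ∀ z ∈ S i, dist z ((a n i, c n i) : ℝ × ℝ) < min δ₁ δ₂ := by
    intro i z hz
    calc dist z ((a n i, c n i) : ℝ × ℝ)
        ≤ Metric.diam (S i) := Metric.dist_le_diam_of_mem
          (isCompact_Icc.isBounded) hz (hz₀mem i)
      _ < min δ₁ δ₂ := hN n hn i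
  have key : ∀ i, abs (geoczeGamma f (a n i) (b n i) (c n i) (d n i) -
      ∫ z in S i, Real.sqrt (1 + p z ^ 2 + q z ^ 2)) ≤
      4 * (ε / 5) * ((b n i - a n i) * (d n i - c n i)) := by
    intro i
    apply rect_bound f p q (ε / 5) _ _ _ _ (hab n i) (hcd n i) hp hq (hSsub i) hdx hdy hg_int
    · intro z hz
      have := hδ₁p z (hSsub i hz) ((a n i, c n i) : ℝ × ℝ) (hSsub i (hz₀mem i))
        ((hclose i z hz).trans_le (min_le_left _ _))
      rw [Real.dist_eq] at this
      exact this.le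
    · intro z hz
      have := hδ₂q z (hSsub i hz) ((a n i, c n i) : ℝ × ℝ) (hSsub i (hz₀mem i))
        ((hclose i z hz).trans_le (min_le_right _ _))
      rw [Real.dist_eq] at this
      exact this.le
  -- total area is 1
  have hvol_i : ∀ i, volume (S i) = ENNReal.ofReal ((b n i - a n i) * (d n i - c n i)) := by
    intro i
    rw [hS, vol_Icc_prod, ← ENNReal.ofReal_mul (by linarith [hab n i])]
  have hvolQ : volume unitSquare = 1 := by
    rw [unitSquare, vol_Icc_prod]
    norm_num
  have hsum_vol : ∑ i, (b n i - a n i) * (d n i - c n i) = 1 := by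
    have h1 : volume (⋃ i, S i) = ∑' i, volume (S i) := measure_iUnion₀ hS_ae hS_nm
    rw [hcover n, hvolQ, tsum_fintype] at h1
    have h2 : ∑ i, volume (S i) = ENNReal.ofReal (∑ i, (b n i - a n i) * (d n i - c n i)) := by
      rw [ENNReal.ofReal_sum_of_nonneg]
      · exact Finset.sum_congr rfl (fun i _ => hvol_i i)
      · intro i _
        exact mul_nonneg (by linarith [hab n i]) (by linarith [hcd n i])
    rw [h2] at h1
    have h3 : ENNReal.ofReal (∑ i, (b n i - a n i) * (d n i - c n i)) = ENNReal.ofReal 1 := by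
      rw [← h1]; norm_num
    have h4 := ENNReal.ofReal_eq_ofReal_iff
      (Finset.sum_nonneg (fun i _ => mul_nonneg (by linarith [hab n i]) (by linarith [hcd n i])))
      (by norm_num) |>.mp h3
    linarith [h4]
  -- split the integral
  have hsplit : ∫ z in unitSquare, Real.sqrt (1 + p z ^ 2 + q z ^ 2) =
      ∑ i, ∫ z in S i, Real.sqrt (1 + p z ^ 2 + q z ^ 2) := by
    rw [← hcover n, integral_iUnion_ae hS_nm hS_ae (by rw [hcover n]; exact hg_int),
      tsum_fintype]
  rw [Real.dist_eq, hsplit]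
  calc abs (∑ i, geoczeGamma f (a n i) (b n i) (c n i) (d n i) -
        ∑ i, ∫ z in S i, Real.sqrt (1 + p z ^ 2 + q z ^ 2))
      = abs (∑ i, (geoczeGamma f (a n i) (b n i) (c n i) (d n i) -
        ∫ z in S i, Real.sqrt (1 + p z ^ 2 + q z ^ 2))) := by
        rw [Finset.sum_sub_distrib]
    _ ≤ ∑ i, abs (geoczeGamma f (a n i) (b n i) (c n i) (d n i) -
        ∫ z in S i, Real.sqrt (1 + p z ^ 2 + q z ^ 2)) := Finset.abs_sum_le_sum_abs _ _
    _ ≤ ∑ i, 4 * (ε / 5) * ((b n i - a n i) * (d n i - c n i)) :=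
        Finset.sum_le_sum (fun i _ => key i)
    _ = 4 * (ε / 5) * ∑ i, (b n i - a n i) * (d n i - c n i) := by
        rw [Finset.mul_sum]
    _ = 4 * (ε / 5) := by rw [hsum_vol]; ring
    _ < ε := by linarith
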